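/- arXiv:2602.11616 — 3 statements merged into one kernel-verified Lean document; each statement's English description precedes it below -/
import Mathlib

section
/- Let A be a positive semidefinite operator on ℂ^d with A ≼ I, and suppose a unit vector ψ satisfies ⟨ψ|A|ψ⟩ = 1 and, for all unit vectors φ orthogonal to ψ, ⟨φ|A|φ⟩ ≤ 1/2 + c for some c ∈ [0, 1/2). Then A ≼ (1/2 + c)·I + (1/2 − c)·|ψ⟩⟨ψ|. -/
open Matrix
open scoped ComplexOrder


lemma vecMulVec_mulVec' {d : ℕ} (u v x : Fin d → ℂ) :
    vecMulVec u v *ᵥ x = (v ⬝ᵥ x) • u := by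
  ext i
  simp [mulVec, vecMulVec_apply, dotProduct, Finset.mul_sum, mul_comm, mul_assoc, mul_left_comm]

lemma herm_conj {d : ℕ} {A : Matrix (Fin d) (Fin d) ℂ} (hA : A.IsHermitian)
    (u v : Fin d → ℂ) : star u ⬝ᵥ A *ᵥ v = star (star v ⬝ᵥ A *ᵥ u) := by
  rw [star_dotProduct, star_mulVec, hA.eq, dotProduct_mulVec]

/-- if `0 ≼ A ≼ I`, `⟨ψ|A|ψ⟩ = 1` for a unit vector `ψ`, and
`⟨φ|A|φ⟩ ≤ 1/2 + c` for all unit vectors `φ ⊥ ψ` (with `c ∈ [0,1/2)`), then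
`A ≼ (1/2 + c)·I + (1/2 − c)·|ψ⟩⟨ψ|`. -/
theorem stmt3 {d : ℕ} (A : Matrix (Fin d) (Fin d) ℂ) (ψ : Fin d → ℂ) (c : ℝ)
    (hA : A.PosSemidef) (hAI : ((1 : Matrix (Fin d) (Fin d) ℂ) - A).PosSemidef)
    (hψ : star ψ ⬝ᵥ ψ = 1) (hAψ : star ψ ⬝ᵥ A.mulVec ψ = 1)
    (hc : 0 ≤ c) (hc2 : c < 1 / 2)
    (horth : ∀ φ : Fin d → ℂ, star φ ⬝ᵥ φ = 1 → star ψ ⬝ᵥ φ = 0 →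
      (star φ ⬝ᵥ A.mulVec φ).re ≤ 1 / 2 + c) :
    (((1 / 2 + c : ℝ) : ℂ) • (1 : Matrix (Fin d) (Fin d) ℂ) +
      ((1 / 2 - c : ℝ) : ℂ) • Matrix.vecMulVec ψ (star ψ) - A).PosSemidef := by
  -- ψ is fixed by A
  have hfix : A *ᵥ ψ = ψ := by
    have h1 : ((1 : Matrix (Fin d) (Fin d) ℂ) - A) *ᵥ ψ = 0 := by
      rw [← hAI.dotProduct_mulVec_zero_iff, sub_mulVec, one_mulVec, dotProduct_sub, hψ, hAψ,
        sub_self]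
    rw [sub_mulVec, one_mulVec, sub_eq_zero] at h1
    exact h1.symm
  -- key scaled inequality
  have key : ∀ φ : Fin d → ℂ, star ψ ⬝ᵥ φ = 0 →
      (star φ ⬝ᵥ A *ᵥ φ).re ≤ (1 / 2 + c) * (star φ ⬝ᵥ φ).re := by
    intro φ hφ
    by_cases h0 : φ = 0
    · simp [h0]
    · have hq : (0 : ℂ) < star φ ⬝ᵥ φ := by
        refine lt_of_le_of_ne (dotProduct_star_self_nonneg φ) ?_
        intro h
        exact h0 (dotProduct_star_self_eq_zero.mp h.symm)
      set t : ℝ := (star φ ⬝ᵥ φ).re with ht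
      have htpos : 0 < t := (Complex.lt_def.mp hq).1
      have hqre : (star φ ⬝ᵥ φ) = (t : ℂ) := Complex.ext rfl (by
        simpa using (Complex.lt_def.mp hq).2.symm)
      set r : ℝ := (Real.sqrt t)⁻¹ with hr
      have hr2 : r ^ 2 = t⁻¹ := by
        rw [hr, inv_pow, Real.sq_sqrt htpos.le]
      set φ' : Fin d → ℂ := (r : ℂ) • φ with hφ'
      have hsc : ∀ M : Matrix (Fin d) (Fin d) ℂ,
          star φ' ⬝ᵥ M *ᵥ φ' = ((r : ℂ) ^ 2) * (star φ ⬝ᵥ M *ᵥ φ) := by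
        intro M
        simp [hφ', mulVec_smul, smul_dotProduct, dotProduct_smul, star_smul, Complex.star_def,
          Complex.conj_ofReal, smul_smul, sq, mul_assoc]
      have hφ'1 : star φ' ⬝ᵥ φ' = 1 := by
        have h1 : star φ' ⬝ᵥ φ' = ((r : ℂ) ^ 2) * (star φ ⬝ᵥ φ) := by
          simpa using hsc 1
        rw [h1, hqre]
        norm_cast
        rw [hr2]
        field_simp
      have hφ'orth : star ψ ⬝ᵥ φ' = 0 := by
        simp [hφ', dotProduct_smul, hφ]
      have hkey := horth φ' hφ'1 hφ'orth
      rw [hsc A] at hkey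
      have hre : (((r : ℂ) ^ 2) * (star φ ⬝ᵥ A *ᵥ φ)).re
          = r ^ 2 * (star φ ⬝ᵥ A *ᵥ φ).re := by
        rw [show ((r : ℂ) ^ 2) = ((r ^ 2 : ℝ) : ℂ) by push_cast; ring, Complex.re_ofReal_mul]
      rw [hre, hr2] at hkey
      calc (star φ ⬝ᵥ A *ᵥ φ).re = t * (t⁻¹ * (star φ ⬝ᵥ A *ᵥ φ).re) := by
            field_simp
        _ ≤ t * (1 / 2 + c) := mul_le_mul_of_nonneg_left hkey htpos.le
        _ = (1 / 2 + c) * t := by ring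
  refine PosSemidef.of_dotProduct_mulVec_nonneg ?_ ?_
  · -- Hermitian
    apply IsHermitian.ext
    intro i j
    have hAij : (starRingEnd ℂ) (A j i) = A i j := hA.1.apply i j
    simp only [Matrix.sub_apply, Matrix.add_apply, Matrix.smul_apply, Matrix.one_apply,
      vecMulVec_apply, Pi.star_apply, smul_eq_mul, star_sub, star_add, star_mul',
      Complex.star_def, Complex.conj_ofReal, Complex.conj_conj]
    rw [apply_ite (starRingEnd ℂ), _root_.map_one, _root_.map_zero, hAij]
    by_cases h : i = j
    · simp [h, mul_comm]
    · simp [h, Ne.symm h, mul_comm]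
  · intro x
    set α : ℂ := star ψ ⬝ᵥ x with hα
    set φ : Fin d → ℂ := x - α • ψ with hφdef
    have hx : x = φ + α • ψ := by simp [hφdef]
    have hφorth : star ψ ⬝ᵥ φ = 0 := by
      simp [hφdef, dotProduct_sub, dotProduct_smul, hψ, hα]
    have hφψ : star φ ⬝ᵥ ψ = 0 := by
      rw [star_dotProduct, hφorth, star_zero]
    have hψAφ : star ψ ⬝ᵥ A *ᵥ φ = 0 := by
      rw [herm_conj hA.1, hfix, hφψ, star_zero]
    have hφAψ : star φ ⬝ᵥ A *ᵥ ψ = 0 := by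
      rw [hfix, hφψ]
    set q : ℂ := star φ ⬝ᵥ φ with hqdef
    set s : ℂ := star φ ⬝ᵥ A *ᵥ φ with hsdef
    have hq0 : (0 : ℂ) ≤ q := dotProduct_star_self_nonneg φ
    have hs0 : (0 : ℂ) ≤ s := hA.dotProduct_mulVec_nonneg φ
    have hqc : q = ((q.re : ℝ) : ℂ) := Complex.ext rfl (by
      simpa using (Complex.le_def.mp hq0).2.symm)
    have hsc : s = ((s.re : ℝ) : ℂ) := Complex.ext rfl (by
      simpa using (Complex.le_def.mp hs0).2.symm)
    have e1 : star x ⬝ᵥ x = q + star α * α := by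
      rw [hx]
      simp [star_add, star_smul, add_dotProduct, dotProduct_add, smul_dotProduct,
        dotProduct_smul, hφorth, hφψ, hψ, hqdef, smul_eq_mul]
      ring
    have e2 : star x ⬝ᵥ ψ = star α := by
      rw [hx]
      simp [star_add, star_smul, add_dotProduct, smul_dotProduct, hφψ, hψ, smul_eq_mul]
    have e3 : star x ⬝ᵥ A *ᵥ x = s + star α * α := by
      rw [hx]
      simp [mulVec_add, mulVec_smul, hfix, star_add, star_smul, add_dotProduct,
        dotProduct_add, smul_dotProduct, dotProduct_smul, hψAφ, hφAψ, hφψ, hψ,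
        hsdef, smul_eq_mul]
      ring
    have hexp : star x ⬝ᵥ
        ((((1 / 2 + c : ℝ) : ℂ) • (1 : Matrix (Fin d) (Fin d) ℂ) +
          ((1 / 2 - c : ℝ) : ℂ) • Matrix.vecMulVec ψ (star ψ) - A)) *ᵥ x
        = ((1 / 2 + c : ℝ) : ℂ) * q - s := by
      rw [sub_mulVec, add_mulVec, smul_mulVec, smul_mulVec, one_mulVec,
        vecMulVec_mulVec', dotProduct_sub, dotProduct_add, dotProduct_smul, dotProduct_smul,
        dotProduct_smul, ← hα, e1, e2, e3]
      simp only [smul_eq_mul]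
      push_cast
      ring
    rw [hexp, hqc, hsc]
    have hineq : 0 ≤ (1 / 2 + c) * q.re - s.re := by
      have := key φ hφorth
      rw [← hqdef, ← hsdef] at this
      linarith
    calc (0 : ℂ) = (((0 : ℝ)) : ℂ) := by norm_cast
      _ ≤ (((1 / 2 + c) * q.re - s.re : ℝ) : ℂ) := by
          rw [Complex.real_le_real]; exact hineq
      _ = ((1 / 2 + c : ℝ) : ℂ) * ((q.re : ℝ) : ℂ) - ((s.re : ℝ) : ℂ) := by push_cast; ring
end

section
/- Let A be a Hermitian operator on ℂ^d with A ≼ (1/2 + c)·I + (1/2 − c)·|ψ⟩⟨ψ| for a unit vector ψ and c ∈ [0,1/2). If ρ is a density operator with tr(ρA) ≥ 1 − ε, then ⟨ψ|ρ|ψ⟩ ≥ 1 − 2ε/(1 − 2c). -/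
open Matrix
open scoped ComplexOrder

lemma psd_trace_nonneg {n : ℕ} {M : Matrix (Fin n) (Fin n) ℂ} (hM : M.PosSemidef) :
    0 ≤ M.trace := by
  rw [Matrix.trace]
  apply Finset.sum_nonneg
  intro i _
  have := hM.dotProduct_mulVec_nonneg (Pi.single i 1)
  simpa [Matrix.mulVec_single, dotProduct, Pi.single_apply,
    Finset.sum_ite_eq'] using this

lemma psd_mul_trace_nonneg {n : ℕ} {M C : Matrix (Fin n) (Fin n) ℂ}
    (hM : M.PosSemidef) (hC : C.PosSemidef) : 0 ≤ (M * C).trace := by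
  open scoped MatrixOrder in
  obtain ⟨S, hSC, hH⟩ : ∃ S : Matrix (Fin n) (Fin n) ℂ, S * S = C ∧ Sᴴ = S :=
    ⟨CFC.sqrt C, CFC.sqrt_mul_sqrt_self C hC.nonneg, (CFC.sqrt_nonneg C).posSemidef.1⟩
  rw [← hSC, ← Matrix.mul_assoc, Matrix.trace_mul_cycle]
  have : (Sᴴ * M * S).PosSemidef := hM.conjTranspose_mul_mul_same _
  rw [hH] at this
  exact psd_trace_nonneg this

lemma trace_mul_vecMulVec {n : ℕ} (M : Matrix (Fin n) (Fin n) ℂ) (ψ : Fin n → ℂ) :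
    (M * Matrix.vecMulVec ψ (star ψ)).trace = star ψ ⬝ᵥ M.mulVec ψ := by
  simp only [Matrix.trace, Matrix.diag, Matrix.mul_apply, Matrix.vecMulVec_apply,
    dotProduct, Matrix.mulVec, Pi.star_apply, Finset.mul_sum]
  congr 1; ext i
  exact Finset.sum_congr rfl fun j _ => by ring

/-- if `A` is Hermitian with `A ≼ (1/2 + c)·I + (1/2 − c)·|ψ⟩⟨ψ|` for a unit
vector `ψ` and `c ∈ [0,1/2)`, and `ρ` is a density operator with `tr(ρA) ≥ 1 − ε`, then
`⟨ψ|ρ|ψ⟩ ≥ 1 − 2ε/(1 − 2c)`. -/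
theorem stmt4 {d : ℕ} (A ρ : Matrix (Fin d) (Fin d) ℂ) (ψ : Fin d → ℂ) (c ε : ℝ)
    (hA : A.IsHermitian) (hψ : star ψ ⬝ᵥ ψ = 1) (hc : 0 ≤ c) (hc2 : c < 1 / 2)
    (hLoew : (((1 / 2 + c : ℝ) : ℂ) • (1 : Matrix (Fin d) (Fin d) ℂ) +
      ((1 / 2 - c : ℝ) : ℂ) • Matrix.vecMulVec ψ (star ψ) - A).PosSemidef)
    (hρ : ρ.PosSemidef) (htr : ρ.trace = 1)
    (htrA : 1 - ε ≤ (ρ * A).trace.re) :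
    1 - 2 * ε / (1 - 2 * c) ≤ (star ψ ⬝ᵥ ρ.mulVec ψ).re := by
  have key := psd_mul_trace_nonneg hρ hLoew
  have hexp : (ρ * (((1 / 2 + c : ℝ) : ℂ) • (1 : Matrix (Fin d) (Fin d) ℂ) +
      ((1 / 2 - c : ℝ) : ℂ) • Matrix.vecMulVec ψ (star ψ) - A)).trace =
      ((1 / 2 + c : ℝ) : ℂ) + ((1 / 2 - c : ℝ) : ℂ) * (star ψ ⬝ᵥ ρ.mulVec ψ)
        - (ρ * A).trace := by
    rw [Matrix.mul_sub, Matrix.mul_add, Matrix.mul_smul, Matrix.mul_smul,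
      Matrix.trace_sub, Matrix.trace_add, Matrix.trace_smul, Matrix.trace_smul,
      Matrix.mul_one, htr, trace_mul_vecMulVec]
    simp
  rw [hexp] at key
  have hre : 0 ≤ ((1 / 2 + c) + (1 / 2 - c) * (star ψ ⬝ᵥ ρ.mulVec ψ).re
      - (ρ * A).trace.re) := by
    have := (Complex.le_def.mp key).1
    simpa using this
  have hpos : (0:ℝ) < 1 / 2 - c := by linarith
  have h2 : 2 * ε / (1 - 2 * c) = ε / (1 / 2 - c) := by
    rw [div_eq_div_iff (by linarith) (by linarith)]; ring
  rw [h2, sub_le_comm, le_div_iff₀ hpos]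
  nlinarith [hre, htrA]
end

section
/- Let ψ be a unit vector in (ℂ^2)^{⊗n}, decomposed over the first r qubits as ψ = ∑_z ⟨z| component with conditional unnormalized states ψ_z, all nonzero. Let α ∈ ℂ^{2^r} be the vector with α_z = ‖ψ_z‖, let β ∈ ℂ^{2^r} satisfy ‖β‖ = 1 and ⟨β, α⟩ = 0, and define φ = ∑_z β_z |z⟩ ⊗ (ψ_z/‖ψ_z‖). Then φ is a unit vector orthogonal to ψ, and ∑_z ‖φ_z‖² · |⟨ψ_z/‖ψ_z‖, φ_z/‖φ_z‖⟩|² = 1 (summing over z with φ_z ≠ 0); i.e., the conditional fidelity in the standard basis weighted by the outcome distribution of φ equals 1. -/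
open Finset Classical

noncomputable section

/-- The conditional (unnormalized) component `ψ_z = (⟨z| ⊗ I) ψ`. -/
noncomputable def condVec {r m : ℕ}
    (ψ : EuclideanSpace ℂ ((Fin r → Bool) × (Fin m → Bool))) (z : Fin r → Bool) :
    EuclideanSpace ℂ (Fin m → Bool) :=
  WithLp.toLp 2 (fun y => ψ (z, y))

lemma condVec_sq {r m : ℕ} (ξ : EuclideanSpace ℂ ((Fin r → Bool) × (Fin m → Bool))) :
    ‖ξ‖ ^ 2 = ∑ z : Fin r → Bool, ‖condVec ξ z‖ ^ 2 := by
  rw [EuclideanSpace.norm_eq, Real.sq_sqrt (by positivity), Fintype.sum_prod_type]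
  refine Finset.sum_congr rfl fun z _ => ?_
  rw [EuclideanSpace.norm_eq, Real.sq_sqrt (by positivity)]
  rfl

/-- given a unit vector `ψ` with all conditional components `ψ_z ≠ 0`,
`α_z = ‖ψ_z‖`, and `β` a unit vector with `⟨β, α⟩ = 0`, the state
`φ = ∑_z β_z |z⟩ ⊗ (ψ_z/‖ψ_z‖)` is a unit vector orthogonal to `ψ` whose
standard-basis weighted conditional fidelity with `ψ` equals `1`. -/
theorem stmt14 {r m : ℕ}
    (ψ : EuclideanSpace ℂ ((Fin r → Bool) × (Fin m → Bool)))
    (hψ : ‖ψ‖ = 1) (hnz : ∀ z, condVec ψ z ≠ 0)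
    (β : (Fin r → Bool) → ℂ) (hβ : ∑ z : Fin r → Bool, ‖β z‖ ^ 2 = 1)
    (hβα : ∑ z : Fin r → Bool, (starRingEnd ℂ) (β z) * (‖condVec ψ z‖ : ℂ) = 0)
    (φ : EuclideanSpace ℂ ((Fin r → Bool) × (Fin m → Bool)))
    (hφ : ∀ z y, φ (z, y) = β z * ψ (z, y) / (‖condVec ψ z‖ : ℂ)) :
    ‖φ‖ = 1 ∧ (inner ℂ ψ φ : ℂ) = 0 ∧
    ∑ z ∈ Finset.univ.filter (fun z => condVec φ z ≠ 0),
      ‖condVec φ z‖ ^ 2 *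
        ‖(inner ℂ ((‖condVec ψ z‖⁻¹ : ℝ) • condVec ψ z)
          ((‖condVec φ z‖⁻¹ : ℝ) • condVec φ z) : ℂ)‖ ^ 2 = 1 := by

  have hnzn : ∀ z, ‖condVec ψ z‖ ≠ 0 := fun z => norm_ne_zero_iff.mpr (hnz z)
  have hc : ∀ z, condVec φ z = (β z / (‖condVec ψ z‖ : ℂ)) • condVec ψ z := by
    intro z
    ext y
    simp only [condVec, hφ, PiLp.smul_apply, smul_eq_mul, PiLp.toLp_apply]
    ring
  have hn : ∀ z, ‖condVec φ z‖ = ‖β z‖ := by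
    intro z
    rw [hc, norm_smul]
    simp only [norm_div, Complex.norm_real, norm_norm]
    rw [div_mul_cancel₀ _ (hnzn z)]
  have hnormφ : ‖φ‖ = 1 := by
    have h2 : ‖φ‖ ^ 2 = 1 := by
      rw [condVec_sq]
      simpa [hn] using hβ
    nlinarith [norm_nonneg φ]
  refine ⟨hnormφ, ?_, ?_⟩
  · -- inner ψ φ = 0
    have key : (inner ℂ ψ φ : ℂ) = ∑ z : Fin r → Bool, β z * (‖condVec ψ z‖ : ℂ) := by
      rw [PiLp.inner_apply, Fintype.sum_prod_type]
      refine Finset.sum_congr rfl fun z _ => ?_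
      have hinner : ∑ y : Fin m → Bool, (starRingEnd ℂ) (ψ (z, y)) * ψ (z, y)
          = ((‖condVec ψ z‖ : ℝ) : ℂ) ^ 2 := by
        have := inner_self_eq_norm_sq_to_K (𝕜 := ℂ) (condVec ψ z)
        rw [PiLp.inner_apply] at this
        simpa [condVec, RCLike.inner_apply, RCLike.conj_mul] using this
      calc ∑ y : Fin m → Bool, inner ℂ (ψ (z, y)) (φ (z, y))
          = ∑ y : Fin m → Bool, (β z / (‖condVec ψ z‖ : ℂ)) *
              ((starRingEnd ℂ) (ψ (z, y)) * ψ (z, y)) := by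
            refine Finset.sum_congr rfl fun y _ => ?_
            simp only [hφ, RCLike.inner_apply]
            ring
        _ = (β z / (‖condVec ψ z‖ : ℂ)) * ((‖condVec ψ z‖ : ℂ)) ^ 2 := by
            rw [← Finset.mul_sum, hinner]
        _ = β z * (‖condVec ψ z‖ : ℂ) := by
            field_simp [Complex.ofReal_ne_zero.mpr (hnzn z)]
    rw [key]
    have := congrArg (starRingEnd ℂ) hβα
    simpa [map_sum, Complex.conj_ofReal] using this
  · -- the fidelity sum
    have hfilter : Finset.univ.filter (fun z => condVec φ z ≠ 0)
        = Finset.univ.filter (fun z => β z ≠ 0) := by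
      refine Finset.filter_congr fun z _ => ?_
      rw [hc]
      constructor
      · intro h hb; exact h (by simp [hb])
      · intro hb h
        rcases smul_eq_zero.mp h with h1 | h2
        · exact hb (by simpa [div_eq_zero_iff, Complex.ofReal_ne_zero.mpr (hnzn z)] using h1)
        · exact hnz z h2
    rw [hfilter]
    have hterm : ∀ z, β z ≠ 0 →
        ‖condVec φ z‖ ^ 2 *
        ‖(inner ℂ ((‖condVec ψ z‖⁻¹ : ℝ) • condVec ψ z)
          ((‖condVec φ z‖⁻¹ : ℝ) • condVec φ z) : ℂ)‖ ^ 2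
        = ‖β z‖ ^ 2 := by
      intro z hbz
      have habs : ‖β z‖ ≠ 0 := norm_ne_zero_iff.mpr hbz
      have : (inner ℂ ((‖condVec ψ z‖⁻¹ : ℝ) • condVec ψ z)
          ((‖condVec φ z‖⁻¹ : ℝ) • condVec φ z) : ℂ)
          = ((‖condVec ψ z‖⁻¹ : ℝ) : ℂ) * ((‖condVec φ z‖⁻¹ : ℝ) : ℂ) *
            (β z / (‖condVec ψ z‖ : ℂ)) * ((‖condVec ψ z‖ : ℝ) : ℂ) ^ 2 := by
        rw [hc]
        rw [RCLike.real_smul_eq_coe_smul (K := ℂ), RCLike.real_smul_eq_coe_smul (K := ℂ)]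
        rw [inner_smul_left, inner_smul_right, inner_smul_right,
          inner_self_eq_norm_sq_to_K]
        simp [Complex.conj_ofReal]
        ring
      rw [this]
      rw [hn]
      simp only [norm_mul, norm_div, norm_pow, norm_inv, Complex.norm_real, norm_norm]
      field_simp [habs, hnzn z]
    calc ∑ z ∈ Finset.univ.filter (fun z => β z ≠ 0),
          ‖condVec φ z‖ ^ 2 *
            ‖(inner ℂ ((‖condVec ψ z‖⁻¹ : ℝ) • condVec ψ z)
              ((‖condVec φ z‖⁻¹ : ℝ) • condVec φ z) : ℂ)‖ ^ 2
        = ∑ z ∈ Finset.univ.filter (fun z => β z ≠ 0), ‖β z‖ ^ 2 := by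
          refine Finset.sum_congr rfl fun z hz => ?_
          exact hterm z (Finset.mem_filter.mp hz).2
      _ = ∑ z : Fin r → Bool, ‖β z‖ ^ 2 := by
          refine Finset.sum_filter_of_ne fun z _ h => ?_
          intro hbz
          exact h (by simp [hbz])
      _ = 1 := hβ
end
end
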